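/- Let X₁ ~ USh(ω,η) with ω > 0, η > 0 and let X₂ have density g(x) = ω·x^(ω−1) on (0,1) (Beta(ω,1)), independent of X₁. Then P(X₂ < X₁) = ∫₀¹ f(x;ω,η)·x^ω dx = (9ω + 28η)/(18(ω+3η)). -/

import Mathlib

open MeasureTheory ProbabilityTheory Real

private lemma log_rpow_intInt' {c : ℝ} (hc : 0 < c) :
    IntervalIntegrable (fun x => Real.log x * x ^ (c-1)) volume 0 1 := by
  rw [intervalIntegrable_iff_integrableOn_Ioc_of_le zero_le_one]
  have hg : IntegrableOn (fun x : ℝ => (2/c) * x ^ (c/2-1)) (Set.Ioc 0 1) := by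
    have := (intervalIntegral.intervalIntegrable_rpow' (a := 0) (b := 1) (r := c/2-1)
      (by linarith)).const_mul (2/c)
    rwa [intervalIntegrable_iff_integrableOn_Ioc_of_le zero_le_one] at this
  refine hg.integrable.mono' ((Real.measurable_log.mul (by fun_prop)).aestronglyMeasurable) ?_
  filter_upwards [ae_restrict_mem measurableSet_Ioc] with x hx
  obtain ⟨hx0, hx1⟩ := hx
  have hlog : -Real.log x ≤ (2/c) * x ^ (-(c/2)) := by
    have h1 : Real.log (x ^ (-(c/2))) ≤ x ^ (-(c/2)) - 1 :=
      Real.log_le_sub_one_of_pos (Real.rpow_pos_of_pos hx0 _)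
    rw [Real.log_rpow hx0] at h1
    have key := mul_le_mul_of_nonneg_left h1 (by positivity : (0:ℝ) ≤ 2/c)
    have hdiv : (0:ℝ) < 2/c := by positivity
    calc -Real.log x = (2/c) * (-(c/2) * Real.log x) := by field_simp
      _ ≤ (2/c) * (x ^ (-(c/2)) - 1) := key
      _ ≤ (2/c) * x ^ (-(c/2)) := by nlinarith
  have hlogx : Real.log x ≤ 0 := Real.log_nonpos hx0.le hx1
  have hp : (0:ℝ) ≤ x ^ (c-1) := (Real.rpow_pos_of_pos hx0 _).le
  rw [Real.norm_eq_abs, abs_mul, abs_of_nonpos hlogx, abs_of_nonneg hp]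
  calc -Real.log x * x ^ (c-1) ≤ (2/c) * x ^ (-(c/2)) * x ^ (c-1) := by
        apply mul_le_mul_of_nonneg_right hlog hp
    _ = (2/c) * x ^ (c/2-1) := by
        rw [mul_assoc, ← Real.rpow_add hx0]; ring_nf

private lemma log_rpow_integral' {c : ℝ} (hc : 0 < c) :
    ∫ x in (0:ℝ)..1, Real.log x * x ^ (c-1) = -(1/c^2) := by
  have hF : ∀ x ∈ Set.Ioo (0:ℝ) 1, HasDerivAt
      (fun x : ℝ => x ^ c * Real.log x / c - x ^ c / c ^ 2)
      (Real.log x * x ^ (c-1)) x := by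
    intro x hx
    have hx0 : x ≠ 0 := ne_of_gt hx.1
    have h1 : HasDerivAt (fun x : ℝ => x ^ c) (c * x ^ (c-1)) x :=
      Real.hasDerivAt_rpow_const (Or.inl hx0)
    have h2 : HasDerivAt Real.log x⁻¹ x := Real.hasDerivAt_log hx0
    have := ((h1.mul h2).div_const c).sub (h1.div_const (c^2))
    refine this.congr_deriv ?_
    rw [Real.rpow_sub hx.1, Real.rpow_one]
    field_simp
    ring
  have hcont : ContinuousOn (fun x : ℝ => x ^ c * Real.log x / c - x ^ c / c ^ 2)
      (Set.Icc 0 1) := by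
    intro x hx
    rcases eq_or_ne x 0 with rfl | hx0
    · rw [ContinuousWithinAt]
      have h0 : (0:ℝ) ^ c * Real.log 0 / c - (0:ℝ) ^ c / c ^ 2 = 0 := by
        simp [Real.zero_rpow hc.ne']
      rw [h0]
      have hIoi : Filter.Tendsto (fun x : ℝ => x ^ c * Real.log x / c - x ^ c / c ^ 2)
          (nhdsWithin 0 (Set.Ioi 0)) (nhds 0) := by
        have hA : Filter.Tendsto (fun x : ℝ => Real.log x * x ^ c)
            (nhdsWithin 0 (Set.Ioi 0)) (nhds 0) :=
          tendsto_log_mul_rpow_nhdsGT_zero hc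
        have hB : Filter.Tendsto (fun x : ℝ => x ^ c) (nhdsWithin 0 (Set.Ioi 0)) (nhds 0) := by
          have := (Real.continuousAt_rpow_const 0 c (Or.inr hc.le)).tendsto
          simp only [Real.zero_rpow hc.ne'] at this
          exact this.mono_left nhdsWithin_le_nhds
        have := (hA.div_const c).sub (hB.div_const (c^2))
        simpa [mul_comm] using this
      have hpure : Filter.Tendsto (fun x : ℝ => x ^ c * Real.log x / c - x ^ c / c ^ 2)
          (pure (0:ℝ)) (nhds 0) := by
        have := tendsto_pure_nhds (fun x : ℝ => x ^ c * Real.log x / c - x ^ c / c ^ 2) 0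
        rwa [h0] at this
      have hIci : Filter.Tendsto (fun x : ℝ => x ^ c * Real.log x / c - x ^ c / c ^ 2)
          (nhdsWithin 0 (Set.Ici 0)) (nhds 0) := by
        rw [← Set.Ioi_union_left, nhdsWithin_union, nhdsWithin_singleton]
        exact Filter.Tendsto.sup hIoi hpure
      exact hIci.mono_left (nhdsWithin_mono _ Set.Icc_subset_Ici_self)
    · have : ContinuousAt (fun x : ℝ => x ^ c * Real.log x / c - x ^ c / c ^ 2) x := by
        have hrc : ContinuousAt (fun x : ℝ => x ^ c) x :=
          Real.continuousAt_rpow_const x c (Or.inl hx0)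
        exact ((hrc.mul (Real.continuousAt_log hx0)).div_const c).sub (hrc.div_const (c^2))
      exact this.continuousWithinAt
  have := intervalIntegral.integral_eq_sub_of_hasDerivAt_of_le zero_le_one hcont hF
      (log_rpow_intInt' hc)
  rw [this]
  simp [Real.zero_rpow hc.ne', Real.one_rpow]

private lemma ush_pointwise (ω η : ℝ) {x : ℝ} (hx0 : 0 < x) :
    (ω / (ω + 3*η) * (ω * x ^ (ω-1) + (2*η - 8*ω*η*Real.log x) * x ^ (2*ω-1))) * x ^ ω
    = ω / (ω + 3*η)*ω * x ^ (2*ω-1) + ω / (ω + 3*η)*(2*η) * x ^ (3*ω-1)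
      - ω / (ω + 3*η)*(8*ω*η) * (Real.log x * x ^ (3*ω-1)) := by
  have e1 : x ^ (ω-1) * x ^ ω = x ^ (2*ω-1) := by rw [← Real.rpow_add hx0]; ring_nf
  have e2 : x ^ (2*ω-1) * x ^ ω = x ^ (3*ω-1) := by rw [← Real.rpow_add hx0]; ring_nf
  have expand : (ω / (ω + 3*η) * (ω * x ^ (ω-1) + (2*η - 8*ω*η*Real.log x) * x ^ (2*ω-1))) * x ^ ω
      = ω / (ω + 3*η)*ω * (x ^ (ω-1) * x ^ ω) + ω / (ω + 3*η)*(2*η) * (x ^ (2*ω-1) * x ^ ω)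
        - ω / (ω + 3*η)*(8*ω*η) * (Real.log x * (x ^ (2*ω-1) * x ^ ω)) := by ring
  rw [expand, e1, e2]

private lemma ush_i1 (ω η : ℝ) (hω : 0 < ω) :
    IntervalIntegrable (fun x : ℝ => ω / (ω + 3*η)*ω * x ^ (2*ω-1)) volume 0 1 :=
  (intervalIntegral.intervalIntegrable_rpow' (by linarith)).const_mul _

private lemma ush_i2 (ω η : ℝ) (hω : 0 < ω) :
    IntervalIntegrable (fun x : ℝ => ω / (ω + 3*η)*(2*η) * x ^ (3*ω-1)) volume 0 1 :=
  (intervalIntegral.intervalIntegrable_rpow' (by linarith)).const_mul _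

private lemma ush_i3 (ω η : ℝ) (hω : 0 < ω) :
    IntervalIntegrable (fun x : ℝ => ω / (ω + 3*η)*(8*ω*η) * (Real.log x * x ^ (3*ω-1)))
      volume 0 1 :=
  (log_rpow_intInt' (by linarith : (0:ℝ) < 3*ω)).const_mul _

private lemma ush_main_integral (ω η : ℝ) (hω : 0 < ω) (hη : 0 < η) :
    ∫ x in (0:ℝ)..1,
      (ω / (ω + 3*η) * (ω * x ^ (ω-1) + (2*η - 8*ω*η*Real.log x) * x ^ (2*ω-1))) * x ^ ω
    = (9*ω + 28*η) / (18 * (ω + 3*η)) := by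
  have hsum : 0 < ω + 3*η := by linarith
  have hcongr : ∫ x in (0:ℝ)..1,
      (ω / (ω + 3*η) * (ω * x ^ (ω-1) + (2*η - 8*ω*η*Real.log x) * x ^ (2*ω-1))) * x ^ ω
      = ∫ x in (0:ℝ)..1,
      (ω / (ω + 3*η)*ω * x ^ (2*ω-1) + ω / (ω + 3*η)*(2*η) * x ^ (3*ω-1)
        - ω / (ω + 3*η)*(8*ω*η) * (Real.log x * x ^ (3*ω-1))) := by
    rw [intervalIntegral.integral_of_le zero_le_one, intervalIntegral.integral_of_le zero_le_one]
    apply MeasureTheory.setIntegral_congr_fun measurableSet_Ioc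
    intro x hx
    exact ush_pointwise ω η hx.1
  rw [hcongr]
  rw [intervalIntegral.integral_sub ((ush_i1 ω η hω).add (ush_i2 ω η hω)) (ush_i3 ω η hω),
    intervalIntegral.integral_add (ush_i1 ω η hω) (ush_i2 ω η hω)]
  rw [intervalIntegral.integral_const_mul, intervalIntegral.integral_const_mul,
    intervalIntegral.integral_const_mul]
  rw [integral_rpow (Or.inl (by linarith : (-1:ℝ) < 2*ω-1)),
    integral_rpow (Or.inl (by linarith : (-1:ℝ) < 3*ω-1)),
    log_rpow_integral' (by linarith : (0:ℝ) < 3*ω)]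
  have h2 : (2*ω-1) + 1 = 2*ω := by ring
  have h3 : (3*ω-1) + 1 = 3*ω := by ring
  rw [h2, h3, Real.one_rpow, Real.one_rpow, Real.zero_rpow (by positivity : (2*ω:ℝ) ≠ 0),
    Real.zero_rpow (by positivity : (3*ω:ℝ) ≠ 0)]
  field_simp
  ring

theorem ush_beta_stress_strength {Ω : Type*} [MeasurableSpace Ω] (P : Measure Ω)
    [IsProbabilityMeasure P] (ω η : ℝ) (hω : 0 < ω) (hη : 0 < η)
    (X₁ X₂ : Ω → ℝ) (hm₁ : Measurable X₁) (hm₂ : Measurable X₂)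
    (hind : IndepFun X₁ X₂ P)
    (hlaw₁ : Measure.map X₁ P = volume.withDensity
      (fun x => ENNReal.ofReal (Set.indicator (Set.Ioc 0 1)
        (fun x => ω / (ω + 3*η) * (ω * x ^ (ω-1) + (2*η - 8*ω*η*Real.log x) * x ^ (2*ω-1))) x)))
    (hlaw₂ : Measure.map X₂ P = volume.withDensity
      (fun x => ENNReal.ofReal (Set.indicator (Set.Ioo 0 1) (fun x => ω * x ^ (ω - 1)) x))) :
    P {a | X₂ a < X₁ a} = ENNReal.ofReal ((9*ω + 28*η) / (18 * (ω + 3*η))) ∧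
    ∫ x in (0:ℝ)..1,
      (ω / (ω + 3*η) * (ω * x ^ (ω-1) + (2*η - 8*ω*η*Real.log x) * x ^ (2*ω-1))) * x ^ ω
    = (9*ω + 28*η) / (18 * (ω + 3*η)) := by
  have hsum : 0 < ω + 3*η := by linarith
  refine ⟨?_, ush_main_integral ω η hω hη⟩
  set f₁ : ℝ → ℝ :=
    fun x => ω / (ω + 3*η) * (ω * x ^ (ω-1) + (2*η - 8*ω*η*Real.log x) * x ^ (2*ω-1)) with hf₁
  set d₂ : ℝ → ENNReal :=
    fun x => ENNReal.ofReal (Set.indicator (Set.Ioo 0 1) (fun x => ω * x ^ (ω - 1)) x) with hd₂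
  set μ₂ : Measure ℝ := volume.withDensity d₂ with hμ₂
  -- CDF of Beta(ω,1)
  have hμ2Iio : ∀ x ∈ Set.Ioc (0:ℝ) 1, μ₂ (Set.Iio x) = ENNReal.ofReal (x ^ ω) := by
    intro x hx
    rw [hμ₂, withDensity_apply _ measurableSet_Iio]
    have hind' : ∀ y : ℝ, d₂ y
        = Set.indicator (Set.Ioo 0 1) (fun y => ENNReal.ofReal (ω * y ^ (ω-1))) y := by
      intro y
      by_cases h : y ∈ Set.Ioo (0:ℝ) 1 <;> simp [hd₂, h]
    simp_rw [hind']
    rw [lintegral_indicator measurableSet_Ioo, Measure.restrict_restrict measurableSet_Ioo]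
    have hinter : Set.Ioo (0:ℝ) 1 ∩ Set.Iio x = Set.Ioo 0 x := by
      ext y
      simp only [Set.mem_inter_iff, Set.mem_Ioo, Set.mem_Iio]
      constructor
      · rintro ⟨⟨h1, _⟩, h3⟩; exact ⟨h1, h3⟩
      · rintro ⟨h1, h2⟩; exact ⟨⟨h1, lt_of_lt_of_le h2 hx.2⟩, h2⟩
    rw [hinter]
    have hint : IntegrableOn (fun y : ℝ => ω * y ^ (ω-1)) (Set.Ioo 0 x) := by
      have := (intervalIntegral.intervalIntegrable_rpow' (a := 0) (b := x) (r := ω-1)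
        (by linarith)).const_mul ω
      rw [intervalIntegrable_iff_integrableOn_Ioc_of_le hx.1.le] at this
      exact this.mono_set Set.Ioo_subset_Ioc_self
    have hnn : 0 ≤ᵐ[volume.restrict (Set.Ioo 0 x)] fun y : ℝ => ω * y ^ (ω-1) := by
      filter_upwards [ae_restrict_mem measurableSet_Ioo] with y hy
      exact mul_nonneg hω.le (Real.rpow_nonneg hy.1.le _)
    rw [← MeasureTheory.ofReal_integral_eq_lintegral_ofReal hint hnn]
    congr 1
    rw [← MeasureTheory.integral_Ioc_eq_integral_Ioo,
      ← intervalIntegral.integral_of_le hx.1.le,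
      intervalIntegral.integral_const_mul,
      integral_rpow (Or.inl (by linarith : (-1:ℝ) < ω-1))]
    rw [Real.zero_rpow (by simpa using hω.ne' : (ω-1)+1 ≠ 0)]
    have : (ω-1) + 1 = ω := by ring
    rw [this]
    field_simp
    simp
  -- nonnegativity of the USh density on (0,1]
  have hf₁nn : ∀ x ∈ Set.Ioc (0:ℝ) 1, 0 ≤ f₁ x := by
    intro x hx
    have hl : Real.log x ≤ 0 := Real.log_nonpos hx.1.le hx.2
    have h2 : 0 ≤ 2*η - 8*ω*η*Real.log x := by
      nlinarith [mul_nonneg (mul_nonneg (by linarith : (0:ℝ) ≤ 8*ω) hη.le) (neg_nonneg.mpr hl)]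
    exact mul_nonneg (div_nonneg hω.le hsum.le)
      (add_nonneg (mul_nonneg hω.le (Real.rpow_nonneg hx.1.le _))
        (mul_nonneg h2 (Real.rpow_nonneg hx.1.le _)))
  -- measurability of the USh density
  have hf₁m : Measurable f₁ := by
    apply Measurable.mul measurable_const
    exact (Measurable.mul measurable_const (by fun_prop)).add
      ((measurable_const.sub (measurable_const.mul Real.measurable_log)).mul (by fun_prop))
  have hd₁m : Measurable fun x => ENNReal.ofReal (Set.indicator (Set.Ioc 0 1) f₁ x) :=
    (hf₁m.indicator measurableSet_Ioc).ennreal_ofReal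
  have hFm : Measurable fun x : ℝ => μ₂ (Set.Iio x) :=
    Monotone.measurable (fun x y hxy => measure_mono (Set.Iio_subset_Iio hxy))
  -- the joint law
  have hmap : Measure.map (fun a => (X₁ a, X₂ a)) P
      = (Measure.map X₁ P).prod (Measure.map X₂ P) :=
    (ProbabilityTheory.indepFun_iff_map_prod_eq_prod_map_map
      hm₁.aemeasurable hm₂.aemeasurable).mp hind
  have hsm : MeasurableSet {p : ℝ × ℝ | p.2 < p.1} :=
    measurableSet_lt measurable_snd measurable_fst
  have hP : P {a | X₂ a < X₁ a}
      = Measure.map (fun a => (X₁ a, X₂ a)) P {p : ℝ × ℝ | p.2 < p.1} := by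
    rw [Measure.map_apply (hm₁.prodMk hm₂) hsm]
    rfl
  rw [hP, hmap, hlaw₁, hlaw₂]
  rw [Measure.prod_apply hsm]
  have hpre : ∀ x : ℝ, (Prod.mk x ⁻¹' {p : ℝ × ℝ | p.2 < p.1}) = Set.Iio x := fun x => rfl
  simp_rw [hpre]
  rw [lintegral_withDensity_eq_lintegral_mul volume hd₁m hFm]
  have hindic : ∀ x : ℝ,
      ((fun x => ENNReal.ofReal (Set.indicator (Set.Ioc 0 1) f₁ x))
        * fun x : ℝ => μ₂ (Set.Iio x)) x
      = Set.indicator (Set.Ioc 0 1) (fun x => ENNReal.ofReal (f₁ x) * μ₂ (Set.Iio x)) x := by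
    intro x
    by_cases h : x ∈ Set.Ioc (0:ℝ) 1 <;> simp [h]
  simp_rw [hindic]
  rw [lintegral_indicator measurableSet_Ioc]
  have hcongr2 : ∫⁻ x in Set.Ioc (0:ℝ) 1, ENNReal.ofReal (f₁ x) * μ₂ (Set.Iio x)
      = ∫⁻ x in Set.Ioc (0:ℝ) 1, ENNReal.ofReal (f₁ x * x ^ ω) := by
    apply setLIntegral_congr_fun measurableSet_Ioc
    intro x hx
    beta_reduce
    rw [hμ2Iio x hx, ← ENNReal.ofReal_mul (hf₁nn x hx)]
  rw [hcongr2]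
  have hint : IntegrableOn (fun x : ℝ => f₁ x * x ^ ω) (Set.Ioc 0 1) := by
    have hG : IntegrableOn (fun x : ℝ =>
        ω / (ω + 3*η)*ω * x ^ (2*ω-1) + ω / (ω + 3*η)*(2*η) * x ^ (3*ω-1)
          - ω / (ω + 3*η)*(8*ω*η) * (Real.log x * x ^ (3*ω-1))) (Set.Ioc 0 1) := by
      have := ((ush_i1 ω η hω).add (ush_i2 ω η hω)).sub (ush_i3 ω η hω)
      rwa [intervalIntegrable_iff_integrableOn_Ioc_of_le zero_le_one] at this
    apply hG.congr_fun _ measurableSet_Ioc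
    intro x hx
    exact (ush_pointwise ω η hx.1).symm
  have hnn : 0 ≤ᵐ[volume.restrict (Set.Ioc 0 1)] fun x : ℝ => f₁ x * x ^ ω := by
    filter_upwards [ae_restrict_mem measurableSet_Ioc] with x hx
    exact mul_nonneg (hf₁nn x hx) (Real.rpow_nonneg hx.1.le _)
  rw [← MeasureTheory.ofReal_integral_eq_lintegral_ofReal hint hnn]
  congr 1
  have := ush_main_integral ω η hω hη
  rw [intervalIntegral.integral_of_le zero_le_one] at this
  exact this
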